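/- Let ζ be a real number with −1 < ζ < 1 and ζ ≠ 0, and set b₁ = √(1−ζ²)/2 (a real number). Define the complex numbers χ₁ = i·√((ζ+1)(ζ+3))/2, λ₁ = i·(ζ+3)·√((ζ+1)(ζ+3))/(4(ζ+1)), χ₂ = i·√((1−ζ)(3−ζ))/2, and λ₂ = i·(ζ−3)·√((1−ζ)(3−ζ))/(4(ζ−1)). For l = 1, 2 let D_l(χ) = (χ − 2λ_l)(χ² − b₁²) − 2χ be a cubic polynomial in χ with complex coefficients. Then for each l = 1, 2, χ_l is a double root of D_l: D_l(χ_l) = 0 and D_l′(χ_l) = 0. -/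

import Mathlib

open Polynomial in
theorem chi_double_root_of_characteristic_cubic (ζ : ℝ) (h₁ : -1 < ζ) (h₂ : ζ < 1)
    (h₀ : ζ ≠ 0) (b₁ : ℝ) (χ₁ lam₁ χ₂ lam₂ : ℂ)
    (hb : b₁ = Real.sqrt (1 - ζ ^ 2) / 2)
    (hχ₁ : χ₁ = Complex.I * (Real.sqrt ((ζ + 1) * (ζ + 3)) : ℝ) / 2)
    (hlam₁ : lam₁ = Complex.I * ((ζ : ℂ) + 3) * (Real.sqrt ((ζ + 1) * (ζ + 3)) : ℝ) /
      (4 * ((ζ : ℂ) + 1)))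
    (hχ₂ : χ₂ = Complex.I * (Real.sqrt ((1 - ζ) * (3 - ζ)) : ℝ) / 2)
    (hlam₂ : lam₂ = Complex.I * ((ζ : ℂ) - 3) * (Real.sqrt ((1 - ζ) * (3 - ζ)) : ℝ) /
      (4 * ((ζ : ℂ) - 1)))
    (D₁ D₂ : Polynomial ℂ)
    (hD₁ : D₁ = (X - C (2 * lam₁)) * (X ^ 2 - C ((b₁ : ℂ) ^ 2)) - C 2 * X)
    (hD₂ : D₂ = (X - C (2 * lam₂)) * (X ^ 2 - C ((b₁ : ℂ) ^ 2)) - C 2 * X) :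
    (D₁.eval χ₁ = 0 ∧ D₁.derivative.eval χ₁ = 0) ∧
      (D₂.eval χ₂ = 0 ∧ D₂.derivative.eval χ₂ = 0) := by
  have hz1 : ((ζ : ℂ) + 1) ≠ 0 := by
    intro h
    have : (ζ : ℂ) = -1 := by linear_combination h
    have : ζ = -1 := by exact_mod_cast this
    linarith
  have hz2 : ((ζ : ℂ) - 1) ≠ 0 := by
    intro h
    have : (ζ : ℂ) = 1 := by linear_combination h
    have : ζ = 1 := by exact_mod_cast this
    linarith
  have hbr : b₁ ^ 2 = (1 - ζ ^ 2) / 4 := by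
    rw [hb]
    rw [div_pow, Real.sq_sqrt (by nlinarith)]
    norm_num
  have hbC : ((b₁ : ℂ)) ^ 2 = (1 - (ζ : ℂ) ^ 2) / 4 := by
    rw [← Complex.ofReal_pow, hbr]; push_cast; ring
  have hs1 : ((Real.sqrt ((ζ + 1) * (ζ + 3)) : ℝ) : ℂ) ^ 2
      = ((ζ : ℂ) + 1) * ((ζ : ℂ) + 3) := by
    have : Real.sqrt ((ζ + 1) * (ζ + 3)) ^ 2 = (ζ + 1) * (ζ + 3) :=
      Real.sq_sqrt (by nlinarith)
    rw [← Complex.ofReal_pow, this]; push_cast; ring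
  have hs2 : ((Real.sqrt ((1 - ζ) * (3 - ζ)) : ℝ) : ℂ) ^ 2
      = (1 - (ζ : ℂ)) * (3 - (ζ : ℂ)) := by
    have : Real.sqrt ((1 - ζ) * (3 - ζ)) ^ 2 = (1 - ζ) * (3 - ζ) :=
      Real.sq_sqrt (by nlinarith)
    rw [← Complex.ofReal_pow, this]; push_cast; ring
  have hI : Complex.I ^ 2 = -1 := Complex.I_sq
  subst hD₁ hD₂ hχ₁ hχ₂ hlam₁ hlam₂
  set s₁ : ℂ := ((Real.sqrt ((ζ + 1) * (ζ + 3)) : ℝ) : ℂ)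
  set s₂ : ℂ := ((Real.sqrt ((1 - ζ) * (3 - ζ)) : ℝ) : ℂ)
  refine ⟨⟨?_, ?_⟩, ?_, ?_⟩ <;>
    simp only [derivative_sub, derivative_mul, derivative_X, derivative_C,
      derivative_pow, eval_sub, eval_mul, eval_add, eval_pow, eval_X, eval_C,
      eval_natCast, eval_ofNat, eval_one, eval_zero, hbC] <;>
    field_simp <;>
    ring_nf
  · linear_combination (32 * Complex.I * s₁) * hs1 + (-32 * Complex.I * s₁ ^ 3) * hI
  · linear_combination (12 - 4 * (ζ : ℂ)) * hs1 + ((-12 + 4 * (ζ : ℂ)) * s₁ ^ 2) * hI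
  · linear_combination (-32 * Complex.I * s₂) * hs2 + (32 * Complex.I * s₂ ^ 3) * hI
  · linear_combination (-12 - 4 * (ζ : ℂ)) * hs2 + ((12 + 4 * (ζ : ℂ)) * s₂ ^ 2) * hI
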